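/- Let f : ℝⁿ → ℝ be convex and differentiable, ψ* convex with generalized Bregman distance D_{ψ*}. Suppose p_{t+1} = p_t − η ∇f(q_t) with q_t = ∇ψ(p_t), q_{t+1} = ∇ψ(p_{t+1}) and η > 0. Then for every q in the domain of ψ*, η(f(q_t) − f(q)) ≤ ⟨η∇f(q_t), q_t − q_{t+1}⟩ − D_{ψ*}(q_{t+1}, q_t) + D_{ψ*}(q, q_t) − D_{ψ*}(q, q_{t+1}). -/

import Mathlib

open scoped RealInnerProductSpace

/-- Gradient inequality for convex differentiable functions. -/
lemma convex_grad_ineq {n : ℕ} (f : EuclideanSpace ℝ (Fin n) → ℝ)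
    (gf : EuclideanSpace ℝ (Fin n) → EuclideanSpace ℝ (Fin n))
    (hfconv : ConvexOn ℝ Set.univ f)
    (hgf : ∀ x, HasGradientAt f (gf x) x)
    (x y : EuclideanSpace ℝ (Fin n)) :
    ⟪gf x, y - x⟫ ≤ f y - f x := by
  set g : ℝ → ℝ := fun t => f (x + t • (y - x)) with hg
  have hc : ∀ t : ℝ, HasDerivAt (fun s : ℝ => x + s • (y - x)) (y - x) t := by
    intro t
    simpa using ((hasDerivAt_id t).smul_const (y - x)).const_add x
  have hd : HasDerivAt g ⟪gf x, y - x⟫ 0 := by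
    have h0 : x + (0:ℝ) • (y - x) = x := by simp
    have := HasFDerivAt.comp_hasDerivAt 0 (h0 ▸ (hgf x).hasFDerivAt) (hc 0)
    simp only [Function.comp_def, zero_smul, add_zero, InnerProductSpace.toDual_apply_apply] at this
    exact this
  have hslope : ∀ t ∈ Set.Ioc (0:ℝ) 1, slope g 0 t ≤ f y - f x := by
    intro t ht
    have hconv := hfconv.2 (Set.mem_univ x) (Set.mem_univ y)
      (by linarith [ht.1, ht.2] : (0:ℝ) ≤ 1 - t) (le_of_lt ht.1) (by ring)
    have hx : (1 - t) • x + t • y = x + t • (y - x) := by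
      module
    rw [hx] at hconv
    have : g t - g 0 ≤ t * (f y - f x) := by
      simp only [hg, zero_smul, add_zero, smul_eq_mul] at hconv ⊢
      nlinarith
    rw [slope_def_field, div_le_iff₀ (by linarith [ht.1] : (0:ℝ) < t - 0)]
    nlinarith [this]
  have htend : Filter.Tendsto (slope g 0) (nhdsWithin 0 (Set.Ioi 0)) (nhds ⟪gf x, y - x⟫) := by
    have := hasDerivAt_iff_tendsto_slope.1 hd
    exact this.mono_left (nhdsWithin_mono 0 (fun t ht => ne_of_gt ht))
  refine le_of_tendsto htend ?_
  filter_upwards [Ioc_mem_nhdsGT one_pos] with t ht using hslope t ht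

/-- Mirror descent step inequality: for convex differentiable `f`, a mirror map `ψ`
with gradient `gψ` and conjugate `ψs`, generalized Bregman distance
`D q p = ψs q − ψs (gψ p) − ⟨p, q − gψ p⟩`, and the update `p₁ = p₀ − η ∇f(q₀)` with
`q₀ = ∇ψ(p₀)`, `q₁ = ∇ψ(p₁)`: for every `q`,
`η(f(q₀) − f(q)) ≤ ⟨η∇f(q₀), q₀ − q₁⟩ − D(q₁, q₀) + D(q, q₀) − D(q, q₁)`. -/
theorem stmt_10 {n : ℕ}
    (f ψ ψs : EuclideanSpace ℝ (Fin n) → ℝ)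
    (gf gψ : EuclideanSpace ℝ (Fin n) → EuclideanSpace ℝ (Fin n))
    (hfconv : ConvexOn ℝ Set.univ f)
    (hgf : ∀ x, HasGradientAt f (gf x) x)
    (hgψ : ∀ p, HasGradientAt ψ (gψ p) p)
    (D : EuclideanSpace ℝ (Fin n) → EuclideanSpace ℝ (Fin n) → ℝ)
    (hD : ∀ q p, D q p = ψs q - ψs (gψ p) - ⟪p, q - gψ p⟫)
    (η : ℝ) (hη : 0 < η)
    (p₀ p₁ : EuclideanSpace ℝ (Fin n))
    (hstep : p₁ = p₀ - η • gf (gψ p₀)) :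
    ∀ q : EuclideanSpace ℝ (Fin n),
      η * (f (gψ p₀) - f q)
        ≤ ⟪η • gf (gψ p₀), gψ p₀ - gψ p₁⟫ - D (gψ p₁) p₀ + D q p₀ - D q p₁ := by
  intro q
  have key : ⟪gf (gψ p₀), q - gψ p₀⟫ ≤ f q - f (gψ p₀) :=
    convex_grad_ineq f gf hfconv hgf (gψ p₀) q
  have hrhs : ⟪η • gf (gψ p₀), gψ p₀ - gψ p₁⟫ - D (gψ p₁) p₀ + D q p₀ - D q p₁
      = η * ⟪gf (gψ p₀), gψ p₀ - q⟫ := by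
    simp only [hD, hstep]
    simp only [inner_sub_left, inner_sub_right, real_inner_smul_left]
    ring
  rw [hrhs]
  have : ⟪gf (gψ p₀), gψ p₀ - q⟫ = -⟪gf (gψ p₀), q - gψ p₀⟫ := by
    rw [← inner_neg_right]; congr 1; abel
  nlinarith [key]
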